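/- Let H > 0 and let q : [0,1]² × [−H, 0] → ℝ be continuously differentiable. Then for each (x, y), |(1/H)·∫_{−H}^{0} (z + H/2)·q(x,y,z) dz| ≤ (H/8)·∫_{−H}^{0} |∂_z q(x,y,z)| dz. -/

import Mathlib

theorem pointwise_average_inequality (H : ℝ) (hH : 0 < H)
    (q : ℝ × ℝ × ℝ → ℝ) (hq : ContDiff ℝ 1 q) :
    ∀ x y : ℝ,
      |(1 / H) * ∫ z in (-H)..0, (z + H / 2) * q (x, y, z)| ≤
        (H / 8) * ∫ z in (-H)..0, |deriv (fun z => q (x, y, z)) z| := by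
  intro x y
  set f : ℝ → ℝ := fun z => q (x, y, z) with hf
  have hcomp : ContDiff ℝ 1 (fun z : ℝ => ((x, y, z) : ℝ × ℝ × ℝ)) :=
    contDiff_const.prodMk (contDiff_const.prodMk contDiff_id)
  have hqf : ContDiff ℝ 1 f := hq.comp hcomp
  have hdiff : Differentiable ℝ f := hqf.differentiable one_ne_zero
  have hderivc : Continuous (deriv f) := hqf.continuous_deriv le_rfl
  set U : ℝ → ℝ := fun z => (z ^ 2 + H * z) / 2 with hU
  have hUderiv : ∀ z : ℝ, HasDerivAt U (z + H / 2) z := by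
    intro z
    have h1 : HasDerivAt (fun z : ℝ => (z ^ 2 + H * z) / 2)
        ((2 * z ^ 1 + H * 1) / 2) z :=
      ((hasDerivAt_pow 2 z).add ((hasDerivAt_id z).const_mul H)).div_const 2
    convert h1 using 1
    ring
  have hUc : Continuous U := by continuity
  have hu'int : IntervalIntegrable (fun z : ℝ => z + H / 2) MeasureTheory.volume (-H) 0 :=
    (continuous_id.add continuous_const).intervalIntegrable _ _
  have hv'int : IntervalIntegrable (deriv f) MeasureTheory.volume (-H) 0 :=
    hderivc.intervalIntegrable _ _
  have parts := intervalIntegral.integral_mul_deriv_eq_deriv_mul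
    (u := U) (u' := fun z => z + H / 2) (v := f) (v' := deriv f)
    (fun z _ => hUderiv z) (fun z _ => (hdiff z).hasDerivAt) hu'int hv'int
  have hU0 : U 0 = 0 := by simp [hU]
  have hUH : U (-H) = 0 := by simp [hU]; ring
  have key : (∫ z in (-H)..0, (z + H / 2) * f z) = -∫ z in (-H)..0, U z * deriv f z := by
    have := parts
    rw [hU0, hUH] at this
    linarith [this]
  rw [key]
  have hab : (-H : ℝ) ≤ 0 := by linarith
  have habs : |∫ z in (-H)..0, U z * deriv f z| ≤ ∫ z in (-H)..0, |U z * deriv f z| :=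
    intervalIntegral.abs_integral_le_integral_abs hab
  have hmono : (∫ z in (-H)..0, |U z * deriv f z|) ≤
      ∫ z in (-H)..0, (H ^ 2 / 8) * |deriv f z| := by
    apply intervalIntegral.integral_mono_on hab
    · exact ((hUc.mul hderivc).abs).intervalIntegrable _ _
    · exact (continuous_const.mul hderivc.abs).intervalIntegrable _ _
    · intro z hz
      obtain ⟨h1, h2⟩ := hz
      rw [abs_mul]
      apply mul_le_mul_of_nonneg_right _ (abs_nonneg _)
      rw [abs_le]
      constructor
      · simp only [hU]; nlinarith [sq_nonneg (z + H / 2)]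
      · simp only [hU]; nlinarith [sq_nonneg (z + H / 2)]
  rw [abs_mul, abs_neg]
  have hpos : |1 / H| = 1 / H := abs_of_pos (by positivity)
  rw [hpos]
  calc (1 / H) * |∫ z in (-H)..0, U z * deriv f z|
      ≤ (1 / H) * ∫ z in (-H)..0, (H ^ 2 / 8) * |deriv f z| := by
        apply mul_le_mul_of_nonneg_left (le_trans habs hmono) (by positivity)
    _ = (H / 8) * ∫ z in (-H)..0, |deriv f z| := by
        rw [intervalIntegral.integral_const_mul]
        field_simp
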